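/- Let X be a finite set of distinct points in ℙ¹ × ℙ¹ over a field k such that no point of X has second coordinate [0:1], with π₁(X) = {A₁, …, A_ℓ} and α_k = α_{A_k}. Then for every a ∈ ℕ, there is an inclusion of ideals ⟨I_X ∩ ⟨x₀,x₁⟩ᵃ, y₀⟩ ⊆ ⋂_{k=1}^{ℓ} ⟨y₀, y₁^{α_k}, L_{A_k}⟩ ∩ ⟨⟨x₀,x₁⟩ᵃ, y₀⟩, where L_{A_k} = a_{k,1}x₀ − a_{k,0}x₁ if A_k = [a_{k,0}:a_{k,1}]. -/
import Mathlib


open MvPolynomial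
open scoped Classical

noncomputable section

/-- `ℙ¹` over `k`, as the projectivization of `k²`. A `Finset` of
`P1 k × P1 k` is a finite set of distinct points in `ℙ¹ × ℙ¹`. -/
abbrev P1 (k : Type) [Field k] := Projectivization k (Fin 2 → k)

variable (k : Type) [Field k]

/-- The linear form `a₁x₀ - a₀x₁` of degree `(1,0)` vanishing at `A = [a₀:a₁]`. -/
def lX (A : P1 k) : MvPolynomial (Fin 4) k :=
  C (A.rep 1) * X 0 - C (A.rep 0) * X 1

/-- The linear form `b₁y₀ - b₀y₁` of degree `(0,1)` vanishing at `B = [b₀:b₁]`. -/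
def lY (B : P1 k) : MvPolynomial (Fin 4) k :=
  C (B.rep 1) * X 2 - C (B.rep 0) * X 3

/-- The defining ideal `I_P = ⟨a₁x₀ - a₀x₁, b₁y₀ - b₀y₁⟩` of a point
`P = [a₀:a₁] × [b₀:b₁]` of `ℙ¹ × ℙ¹`. Here `x₀,x₁,y₀,y₁` are `X 0, X 1, X 2, X 3`. -/
def pointIdeal (P : P1 k × P1 k) : Ideal (MvPolynomial (Fin 4) k) :=
  Ideal.span {lX k P.1, lY k P.2}

/-- The defining ideal `I_X = ⋂_{P ∈ X} I_P` of a finite set of points of `ℙ¹ × ℙ¹`. -/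
def IX (Xs : Finset (P1 k × P1 k)) : Ideal (MvPolynomial (Fin 4) k) :=
  ⨅ P ∈ Xs, pointIdeal k P

/-- The irrelevant ideal `B = ⟨x₀y₀, x₀y₁, x₁y₀, x₁y₁⟩`. -/
def Birr : Ideal (MvPolynomial (Fin 4) k) :=
  Ideal.span {X 0 * X 2, X 0 * X 3, X 1 * X 2, X 1 * X 3}

/-- The ideal `⟨x₀, x₁⟩`. -/
def Mx : Ideal (MvPolynomial (Fin 4) k) := Ideal.span {X 0, X 1}

/-- The bidegree-`(i,j)` component `S_{(i,j)}` of `S = k[x₀,x₁,y₀,y₁]`: the `k`-span of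
monomials of degree `i` in `x₀,x₁` and degree `j` in `y₀,y₁`. -/
def bicomp (i j : ℕ) : Submodule k (MvPolynomial (Fin 4) k) :=
  Submodule.span k {f | ∃ m : Fin 4 →₀ ℕ, m 0 + m 1 = i ∧ m 2 + m 3 = j ∧ f = monomial m 1}

/-- The Hilbert function `H_{S/I}(i,j) = dim_k S_{(i,j)} - dim_k (I ∩ S_{(i,j)})`. -/
def hilb (I : Ideal (MvPolynomial (Fin 4) k)) (i j : ℕ) : ℤ :=
  (Module.finrank k (bicomp k i j) : ℤ) -
    (Module.finrank k
      ((Submodule.restrictScalars k I) ⊓ bicomp k i j : Submodule k (MvPolynomial (Fin 4) k)) : ℤ)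

/-- `π₁(X)`, the set of distinct first coordinates of points of `X`. -/
def pi1 (Xs : Finset (P1 k × P1 k)) : Finset (P1 k) := Xs.image Prod.fst

/-- `α_A`, the number of points of `X` whose first coordinate is `A`. -/
def alphaA (Xs : Finset (P1 k × P1 k)) (A : P1 k) : ℕ :=
  (Xs.filter (fun P => P.1 = A)).card

/-- The point `[0:1]` of `ℙ¹`. -/
def pt01 : P1 k := Projectivization.mk k ![0, 1] (by
  intro h
  have := congrFun h 1
  simp at this)

section Aux

variable {k}

/-- Substituting for a single variable changes a polynomial by a multiple of
`X i0 - g i0`. -/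
lemma sub_aeval_mem (g : Fin 4 → MvPolynomial (Fin 4) k) (i0 : Fin 4)
    (hg : ∀ i, i ≠ i0 → g i = X i) (f : MvPolynomial (Fin 4) k) :
    f - aeval g f ∈ Ideal.span {X i0 - g i0} := by
  induction f using MvPolynomial.induction_on with
  | C a => simp
  | add p q hp hq =>
      rw [map_add]
      have := Ideal.add_mem _ hp hq
      convert this using 1; ring
  | mul_X p i hp =>
      rw [map_mul, aeval_X]
      have h1 : p * X i - aeval g p * g i
          = p * (X i - g i) + (p - aeval g p) * g i := by ring
      rw [h1]
      refine Ideal.add_mem _ ?_ (Ideal.mul_mem_right _ _ hp)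
      rcases eq_or_ne i i0 with h | h
      · subst h; exact Ideal.mul_mem_left _ _ (Ideal.subset_span rfl)
      · rw [hg i h]; simp

/-- The substitution `X 3 ↦ C e * X 2`. -/
def gE (e : k) : Fin 4 → MvPolynomial (Fin 4) k :=
  fun i => if i = 3 then C e * X 2 else X i

lemma aeval_gE_L (e : k) : aeval (gE e) (X 3 - C e * X 2 : MvPolynomial (Fin 4) k) = 0 := by
  simp [gE]

lemma mem_span_L_iff (e : k) (f : MvPolynomial (Fin 4) k) :
    f ∈ Ideal.span {X 3 - C e * X 2} ↔ aeval (gE e) f = 0 := by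
  constructor
  · intro hf
    rw [Ideal.mem_span_singleton] at hf
    obtain ⟨c, rfl⟩ := hf
    rw [map_mul, aeval_gE_L, zero_mul]
  · intro hf
    have h2 := sub_aeval_mem (gE e) 3 (fun i hi => by simp [gE, hi]) f
    rw [hf, sub_zero] at h2
    exact h2

lemma L_ne_zero (e : k) : (X 3 - C e * X 2 : MvPolynomial (Fin 4) k) ≠ 0 := by
  intro h
  have := congrArg (eval (fun i : Fin 4 => if i = 3 then (1 : k) else 0)) h
  simp at this

lemma prime_L (e : k) : Prime (X 3 - C e * X 2 : MvPolynomial (Fin 4) k) := by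
  refine ⟨L_ne_zero e, ?_, ?_⟩
  · intro h
    have h2 := h.map (aeval (gE e) : MvPolynomial (Fin 4) k →ₐ[k] MvPolynomial (Fin 4) k)
    rw [aeval_gE_L] at h2
    exact not_isUnit_zero h2
  · intro p q hpq
    rw [← Ideal.mem_span_singleton, mem_span_L_iff, map_mul] at hpq
    rcases mul_eq_zero.1 hpq with h | h
    · left; rw [← Ideal.mem_span_singleton, mem_span_L_iff]; exact h
    · right; rw [← Ideal.mem_span_singleton, mem_span_L_iff]; exact h

lemma L_not_dvd (e e' : k) (hee : e ≠ e') :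
    ¬ (X 3 - C e * X 2 : MvPolynomial (Fin 4) k) ∣ (X 3 - C e' * X 2) := by
  intro h
  rw [← Ideal.mem_span_singleton, mem_span_L_iff] at h
  have hg3 : gE e 3 = C e * X 2 := rfl
  have hg2 : gE e 2 = X 2 := rfl
  rw [map_sub, map_mul, aeval_X, aeval_X, hg3, hg2] at h
  have hC : aeval (gE e) (C e' : MvPolynomial (Fin 4) k) = C e' := by
    simp
  rw [hC, ← sub_mul, ← map_sub] at h
  rcases mul_eq_zero.1 h with h | h
  · rw [MvPolynomial.C_eq_zero, sub_eq_zero] at h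
    exact hee h
  · exact MvPolynomial.X_ne_zero _ h

lemma mem_span_prod (E : Finset k) (f : MvPolynomial (Fin 4) k)
    (h : ∀ e ∈ E, f ∈ Ideal.span {X 3 - C e * X 2}) :
    f ∈ Ideal.span {∏ e ∈ E, (X 3 - C e * X 2)} := by
  classical
  induction E using Finset.induction with
  | empty => simp [Ideal.span_singleton_one]
  | @insert e E he ih =>
      have hf1 : (X 3 - C e * X 2 : MvPolynomial (Fin 4) k) ∣ f := by
        rw [← Ideal.mem_span_singleton]; exact h e (Finset.mem_insert_self _ _)
      have hf2 := ih (fun e' he' => h e' (Finset.mem_insert_of_mem he'))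
      rw [Ideal.mem_span_singleton] at hf2 ⊢
      obtain ⟨q, rfl⟩ := hf2
      have hnd : ¬ (X 3 - C e * X 2 : MvPolynomial (Fin 4) k) ∣
          ∏ e' ∈ E, (X 3 - C e' * X 2) := by
        rw [Prime.dvd_finset_prod_iff (prime_L e)]
        rintro ⟨e', he', hd⟩
        exact L_not_dvd e e' (fun hc => he (hc ▸ he')) hd
      have hq : (X 3 - C e * X 2 : MvPolynomial (Fin 4) k) ∣ q :=
        ((prime_L e).dvd_mul.1 hf1).resolve_left hnd
      obtain ⟨r, rfl⟩ := hq
      rw [Finset.prod_insert he]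
      exact ⟨r, by ring⟩

lemma prod_mem_span (E : Finset k) :
    (∏ e ∈ E, (X 3 - C e * X 2 : MvPolynomial (Fin 4) k)) ∈
      Ideal.span {X 2, (X 3 : MvPolynomial (Fin 4) k) ^ E.card} := by
  classical
  induction E using Finset.induction with
  | empty =>
      simp only [Finset.prod_empty, Finset.card_empty, pow_zero]
      exact Ideal.subset_span (by simp)
  | @insert e E he ih =>
      rw [Finset.prod_insert he, Finset.card_insert_of_notMem he]
      rw [Ideal.mem_span_pair] at ih ⊢
      obtain ⟨p, q, hpq⟩ := ih
      refine ⟨p * X 3 - C e * (∏ e' ∈ E, (X 3 - C e' * X 2)), q, ?_⟩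
      rw [← hpq]; ring

lemma rep0_ne_zero {B : P1 k} (hB : B ≠ pt01 k) : B.rep 0 ≠ 0 := by
  intro h0
  apply hB
  have h1 : B.rep 1 ≠ 0 := by
    intro h1
    apply B.rep_nonzero
    funext i
    fin_cases i <;> simpa [h0, h1]
  rw [← Projectivization.mk_rep B]
  unfold pt01
  rw [Projectivization.mk_eq_mk_iff']
  refine ⟨B.rep 1, ?_⟩
  funext i
  fin_cases i <;> simp [h0]

lemma rep_eq_of_div_eq {B B' : P1 k} (hB : B.rep 0 ≠ 0) (hB' : B'.rep 0 ≠ 0)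
    (h : B.rep 1 / B.rep 0 = B'.rep 1 / B'.rep 0) : B = B' := by
  rw [← Projectivization.mk_rep B, ← Projectivization.mk_rep B',
    Projectivization.mk_eq_mk_iff']
  refine ⟨B.rep 0 / B'.rep 0, ?_⟩
  rw [div_eq_div_iff hB hB'] at h
  funext i
  fin_cases i
  · show B.rep 0 / B'.rep 0 * B'.rep 0 = B.rep 0
    exact div_mul_cancel₀ _ hB'
  · show B.rep 0 / B'.rep 0 * B'.rep 1 = B.rep 1
    rw [div_mul_eq_mul_div, div_eq_iff hB']
    linear_combination -h

lemma span_lY (B : P1 k) (hB : B.rep 0 ≠ 0) :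
    Ideal.span {lY k B} = Ideal.span {X 3 - C (B.rep 1 / B.rep 0) * X 2} := by
  have hb : -(B.rep 0) * (B.rep 1 / B.rep 0) = -(B.rep 1) := by
    field_simp [mul_comm]
  have hE : lY k B = C (-(B.rep 0)) * (X 3 - C (B.rep 1 / B.rep 0) * X 2) := by
    rw [lY, mul_sub, ← mul_assoc, ← C_mul, hb, map_neg, map_neg]
    ring
  rw [hE, Ideal.span_singleton_mul_left_unit]
  exact (isUnit_iff_ne_zero.2 (neg_ne_zero.2 hB)).map C

lemma exists_tau (A : P1 k) :
    ∃ τ : MvPolynomial (Fin 4) k →ₐ[k] MvPolynomial (Fin 4) k,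
      (∀ f, f - τ f ∈ Ideal.span {lX k A}) ∧ τ (lX k A) = 0 ∧
        τ (X 2) = X 2 ∧ τ (X 3) = X 3 := by
  rcases eq_or_ne (A.rep 1) 0 with h1 | h1
  · have h0 : A.rep 0 ≠ 0 := by
      intro h0; apply A.rep_nonzero; funext i; fin_cases i <;> simpa [h0, h1]
    refine ⟨aeval (fun i => if i = 1 then 0 else X i), ?_, ?_, ?_, ?_⟩
    · intro f
      have hE : lX k A = C (-(A.rep 0)) * X 1 := by
        rw [lX, h1, map_neg]; simp
      have hspan : Ideal.span {lX k A} = Ideal.span {(X 1 : MvPolynomial (Fin 4) k)} := by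
        rw [hE, Ideal.span_singleton_mul_left_unit]
        exact (isUnit_iff_ne_zero.2 (neg_ne_zero.2 h0)).map C
      rw [hspan]
      have := sub_aeval_mem (fun i => if i = 1 then 0 else X i) 1
        (fun i hi => by simp [hi]) f
      simpa using this
    · simp [lX, h1]
    · simp
    · simp
  · have hm : A.rep 1 * (A.rep 0 * (A.rep 1)⁻¹) = A.rep 0 := by field_simp
    have hE : lX k A = C (A.rep 1) *
        (X 0 - C (A.rep 0 * (A.rep 1)⁻¹) * X 1) := by
      rw [lX, mul_sub, ← mul_assoc, ← C_mul, hm]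
    refine ⟨aeval (fun i => if i = 0 then C (A.rep 0 * (A.rep 1)⁻¹) * X 1 else X i),
      ?_, ?_, ?_, ?_⟩
    · intro f
      have hspan : Ideal.span {lX k A} =
          Ideal.span {(X 0 - C (A.rep 0 * (A.rep 1)⁻¹) * X 1 : MvPolynomial (Fin 4) k)} := by
        rw [hE, Ideal.span_singleton_mul_left_unit]
        exact (isUnit_iff_ne_zero.2 h1).map C
      rw [hspan]
      have := sub_aeval_mem (fun i => if i = 0 then C (A.rep 0 * (A.rep 1)⁻¹) * X 1 else X i)
        0 (fun i hi => by simp [hi]) f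
      simpa using this
    · rw [hE]; simp
    · simp
    · simp

lemma key (Xs : Finset (P1 k × P1 k)) (h01 : ∀ P ∈ Xs, P.2 ≠ pt01 k)
    (A : P1 k) (f : MvPolynomial (Fin 4) k) (hf : f ∈ IX k Xs) :
    f ∈ Ideal.span {X 2, X 3 ^ (alphaA k Xs A), lX k A} := by
  classical
  obtain ⟨τ, hsub, hτlX, hτ2, hτ3⟩ := exists_tau A
  have hτC : ∀ c : k, τ (C c) = C c := fun c => by
    rw [← MvPolynomial.algebraMap_eq]; exact τ.commutes c
  set T := Xs.filter (fun P => P.1 = A) with hT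
  set E : Finset k := T.image (fun P => P.2.rep 1 / P.2.rep 0) with hE
  have hrep0 : ∀ P ∈ T, P.2.rep 0 ≠ 0 := fun P hP =>
    rep0_ne_zero (h01 P (Finset.mem_filter.1 hP).1)
  have hcard : E.card = alphaA k Xs A := by
    rw [hE, alphaA, ← hT]
    apply Finset.card_image_of_injOn
    intro P hP P' hP' hPP'
    have h2 : P.2 = P'.2 := rep_eq_of_div_eq (hrep0 P hP) (hrep0 P' hP') hPP'
    have h1 : P.1 = P'.1 := by
      rw [(Finset.mem_filter.1 hP).2, (Finset.mem_filter.1 hP').2]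
    exact Prod.ext h1 h2
  have hmem : ∀ e ∈ E, τ f ∈ Ideal.span {X 3 - C e * X 2} := by
    intro e he
    rw [hE] at he
    obtain ⟨P, hP, rfl⟩ := Finset.mem_image.1 he
    have hPX : P ∈ Xs := (Finset.mem_filter.1 hP).1
    have hP1 : P.1 = A := (Finset.mem_filter.1 hP).2
    have hfP : f ∈ pointIdeal k P := by
      have h := hf
      simp only [IX, Ideal.mem_iInf] at h
      exact h P hPX
    rw [pointIdeal, hP1, Ideal.mem_span_pair] at hfP
    obtain ⟨u, v, huv⟩ := hfP
    have hτlY : τ (lY k P.2) = lY k P.2 := by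
      rw [lY, map_sub, map_mul, map_mul, hτ2, hτ3, hτC, hτC]
    have hτf : τ f = τ v * lY k P.2 := by
      rw [← huv, map_add, map_mul, map_mul, hτlX, hτlY, mul_zero, zero_add]
    rw [← span_lY _ (hrep0 P hP), hτf, Ideal.mem_span_singleton]
    exact dvd_mul_left _ _
  have hτf2 : τ f ∈ Ideal.span {X 2, X 3 ^ (alphaA k Xs A)} := by
    have h1 := mem_span_prod E (τ f) hmem
    have h2 := prod_mem_span (k := k) E
    rw [hcard] at h2
    rw [Ideal.mem_span_singleton] at h1
    obtain ⟨c, hc⟩ := h1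
    rw [hc, mul_comm]
    exact Ideal.mul_mem_left _ _ h2
  have h3 : Ideal.span {X 2, X 3 ^ (alphaA k Xs A)} ≤
      Ideal.span {X 2, X 3 ^ (alphaA k Xs A), lX k A} :=
    Ideal.span_mono (by intro x hx; simp at hx ⊢; tauto)
  have h4 : Ideal.span {lX k A} ≤
      Ideal.span {X 2, X 3 ^ (alphaA k Xs A), lX k A} :=
    Ideal.span_mono (by intro x hx; simp at hx ⊢; tauto)
  have := Ideal.add_mem _ (h4 (hsub f)) (h3 hτf2)
  simpa using this

end Aux

/-- if no point of `X` has second coordinate `[0:1]`, then for every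
`a ∈ ℕ`, `⟨I_X ∩ ⟨x₀,x₁⟩ᵃ, y₀⟩ ⊆ ⋂_{A ∈ π₁(X)} ⟨y₀, y₁^{α_A}, L_A⟩ ∩ ⟨⟨x₀,x₁⟩ᵃ, y₀⟩`. -/
theorem stmt13 [CharZero k] (Xs : Finset (P1 k × P1 k))
    (h01 : ∀ P ∈ Xs, P.2 ≠ pt01 k) (a : ℕ) :
    (IX k Xs ⊓ (Mx k) ^ a) ⊔ Ideal.span {X 2} ≤
      (⨅ A ∈ pi1 k Xs, Ideal.span {X 2, X 3 ^ (alphaA k Xs A), lX k A}) ⊓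
        ((Mx k) ^ a ⊔ Ideal.span {X 2}) := by
  apply sup_le
  · apply le_inf
    · apply le_iInf₂
      intro A _
      intro f hf
      exact key Xs h01 A f (Submodule.mem_inf.1 hf).1
    · exact le_trans inf_le_right le_sup_left
  · apply le_inf
    · apply le_iInf₂
      intro A _
      apply Ideal.span_mono
      intro x hx; simp at hx ⊢; tauto
    · exact le_sup_right

end
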